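/- Let r = s² be a perfect square with s odd, and a(n) = ⌊n/s + s/2⌋. Then for all n ≥ s², S(n) := ∑_{j=0}^{s²-1} a(n-j) = sn - s(s-1)/2, and a(S(n)) = n. -/

import Mathlib

open Real Finset

private lemma floorR (p : ℤ) (q : ℕ) : ⌊(p : ℝ) / (q : ℝ)⌋ = p / (q : ℤ) := by
  rw [show ((p:ℝ)/(q:ℝ)) = ((p / q : ℚ) : ℝ) by push_cast; ring, Rat.floor_cast,
    Rat.floor_intCast_div_natCast]

-- block lemma
private lemma blockSum (s : ℤ) (hs1 : 1 ≤ s) :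
    ∀ c : ℤ, ∑ j ∈ Finset.range s.toNat, (c - (j:ℤ)) / s = c - s + 1 := by
  have hs0 : 0 < s := hs1
  have hst : (s.toNat : ℤ) = s := Int.toNat_of_nonneg hs0.le
  obtain ⟨t, ht⟩ : ∃ t : ℕ, s.toNat = t + 1 :=
    ⟨s.toNat - 1, by omega⟩
  have htZ : (t : ℤ) = s - 1 := by omega
  have step : ∀ c : ℤ, (∑ j ∈ Finset.range s.toNat, (c + 1 - (j:ℤ)) / s)
      = (∑ j ∈ Finset.range s.toNat, (c - (j:ℤ)) / s) + 1 := by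
    intro c
    rw [ht, Finset.sum_range_succ', Finset.sum_range_succ]
    have h1 : ∑ j ∈ Finset.range t, (c + 1 - ((j + 1 : ℕ) : ℤ)) / s
        = ∑ j ∈ Finset.range t, (c - (j:ℤ)) / s := by
      apply Finset.sum_congr rfl; intro j _; congr 1; push_cast; ring
    rw [h1]
    have h2 : (c + 1 - ((0:ℕ):ℤ)) / s = (c - (t:ℤ)) / s + 1 := by
      have e : (c + 1 - ((0:ℕ):ℤ)) = (c - (t:ℤ)) + 1 * s := by push_cast; omega
      rw [e, Int.add_mul_ediv_right _ _ hs0.ne']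
    rw [h2]; ring
  intro c
  induction c using Int.induction_on with
  | zero =>
    have hterm : ∀ j ∈ Finset.range s.toNat, ((0:ℤ) - (j:ℤ)) / s
        = (if j = 0 then 0 else -1) := by
      intro j hj
      simp only [Finset.mem_range] at hj
      by_cases h : j = 0
      · simp [h]
      · have hj1 : 1 ≤ (j:ℤ) := by omega
        have hjs : (j:ℤ) ≤ s := by omega
        have : ((0:ℤ) - j) / s = (s - j) / s - 1 := by
          have : (0 - (j:ℤ)) = (s - j) + (-1) * s := by ring
          rw [this, Int.add_mul_ediv_right _ _ hs0.ne']; ring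
        rw [this, Int.ediv_eq_zero_of_lt (by omega) (by omega)]
        simp [h]
    rw [Finset.sum_congr rfl hterm, ht, Finset.sum_range_succ']
    simp only [if_neg (Nat.succ_ne_zero _), if_pos rfl]
    simp
    omega
  | succ k ih =>
    have := step k
    push_cast at ih this ⊢
    rw [this, ih]; ring
  | pred k ih =>
    have := step (-(k:ℤ) - 1)
    push_cast at ih this ⊢
    have e : (-(k:ℤ) - 1 + 1) = -(k:ℤ) := by ring
    rw [e] at this
    have : (∑ j ∈ Finset.range s.toNat, (-(k:ℤ) - 1 - (j:ℤ)) / s)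
        = (∑ j ∈ Finset.range s.toNat, (-(k:ℤ) - (j:ℤ)) / s) - 1 := by omega
    rw [this, ih]; ring

private lemma multiSum (s : ℤ) (hs1 : 1 ≤ s) :
    ∀ K : ℕ, ∀ c : ℤ, ∑ j ∈ Finset.range (s.toNat * K), (c - (j:ℤ)) / s
      = ∑ k ∈ Finset.range K, (c - s * k - s + 1) := by
  have hst : (s.toNat : ℤ) = s := Int.toNat_of_nonneg (by omega)
  intro K
  induction K with
  | zero => simp
  | succ K ih =>
    intro c
    have hsplit : Finset.range (s.toNat * (K + 1))
        = Finset.range (s.toNat * K + s.toNat) := by ring_nf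
    rw [hsplit]
    rw [Finset.sum_range_add]
    rw [ih c, Finset.sum_range_succ]
    congr 1
    have : ∀ j : ℕ, (c - ((s.toNat * K : ℕ) + (j:ℕ) : ℤ)) / s
        = ((c - s * K) - (j:ℤ)) / s := by
      intro j; push_cast [hst]; ring_nf
    calc ∑ j ∈ Finset.range s.toNat, (c - ((s.toNat * K + j : ℕ) : ℤ)) / s
        = ∑ j ∈ Finset.range s.toNat, ((c - s * K) - (j:ℤ)) / s := by
          apply Finset.sum_congr rfl; intro j _; push_cast [hst]; ring_nf
      _ = (c - s * K) - s + 1 := blockSum s hs1 _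
      _ = c - s * K - s + 1 := by ring

theorem stmt8 (s : ℤ) (hs1 : 1 ≤ s) (hodd : Odd s)
    (a : ℤ → ℤ)
    (ha : ∀ n : ℤ, a n = ⌊(n : ℝ) / s + (s : ℝ) / 2⌋)
    (S : ℤ → ℤ)
    (hS : ∀ n : ℤ, S n = ∑ j ∈ Finset.range (s ^ 2).toNat, a (n - j)) :
    ∀ n : ℤ, s ^ 2 ≤ n →
      S n = s * n - s * (s - 1) / 2 ∧ a (S n) = n := by
  obtain ⟨t, ht⟩ := hodd
  have ht0 : 0 ≤ t := by omega
  have hs0 : 0 < s := hs1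
  have hst : (s.toNat : ℤ) = s := Int.toNat_of_nonneg hs0.le
  set h : ℤ := 2 * t * t + 2 * t with hh
  have hsq : s ^ 2 = 2 * h + 1 := by rw [ht, hh]; ring
  -- a m = (m + h) / s
  have haI : ∀ m : ℤ, a m = (m + h) / s := by
    intro m
    have e1 : (m : ℝ) / s + (s : ℝ) / 2 = ((2 * m + s ^ 2 : ℤ) : ℝ) / ((2 * s).toNat : ℝ) := by
      have h2s : ((2 * s).toNat : ℤ) = 2 * s := Int.toNat_of_nonneg (by omega)
      have : ((2 * s).toNat : ℝ) = 2 * (s : ℝ) := by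
        exact_mod_cast congrArg (fun z : ℤ => (z : ℝ)) h2s
      rw [this]
      have hs' : (s : ℝ) ≠ 0 := by exact_mod_cast hs0.ne'
      field_simp
      push_cast
      ring
    rw [ha, e1, floorR]
    have e2 : ((2 * s).toNat : ℤ) = 2 * s := Int.toNat_of_nonneg (by omega)
    rw [e2]
    -- (2m + s^2)/(2s) = (m+h)/s
    have e3 : 2 * m + s ^ 2 = (2 * ((m + h) % s) + 1) + ((m + h) / s) * (2 * s) := by
      have := Int.mul_ediv_add_emod (m + h) s
      rw [hsq]; linarith
    rw [e3, Int.add_mul_ediv_right _ _ (by omega : (2*s) ≠ 0),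
      Int.ediv_eq_zero_of_lt (by have := Int.emod_nonneg (m + h) hs0.ne'; omega)
        (by have := Int.emod_lt_of_pos (m + h) hs0; omega)]
    ring
  intro n hn
  have hSn : S n = s * n - s * t := by
    rw [hS]
    have hK : (s ^ 2).toNat = s.toNat * s.toNat := by
      have : ((s.toNat * s.toNat : ℕ) : ℤ) = s ^ 2 := by push_cast [hst]; ring
      omega
    rw [hK]
    have : ∀ j ∈ Finset.range (s.toNat * s.toNat), a (n - j) = ((n + h) - (j:ℤ)) / s := by
      intro j _; rw [haI]; ring_nf
    rw [Finset.sum_congr rfl this, multiSum s hs1]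
    have gauss : 2 * (∑ k ∈ Finset.range s.toNat, (k : ℤ)) = s * (s - 1) := by
      have := Finset.sum_range_id_mul_two s.toNat
      have h2 : ((∑ i ∈ Finset.range s.toNat, (i:ℕ)) * 2 : ℕ) = (s.toNat * (s.toNat - 1) : ℕ) := this
      have hs1' : 1 ≤ s.toNat := by omega
      have h4 := congrArg (Nat.cast : ℕ → ℤ) h2
      push_cast [Nat.cast_sub hs1'] at h4
      rw [hst] at h4
      linarith
    have expand : ∑ k ∈ Finset.range s.toNat, ((n + h) - s * k - s + 1)
        = s.toNat * ((n + h) - s + 1) - s * ∑ k ∈ Finset.range s.toNat, (k:ℤ) := by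
      have e1 : ∑ k ∈ Finset.range s.toNat, ((n + h) - s * k - s + 1)
          = ∑ k ∈ Finset.range s.toNat, (((n + h) - s + 1) - s * (k:ℤ)) := by
        apply Finset.sum_congr rfl; intro k _; ring
      rw [e1, Finset.sum_sub_distrib, Finset.sum_const, ← Finset.mul_sum,
        nsmul_eq_mul, Finset.card_range]
    rw [expand, hst]
    -- now linear arithmetic with gauss, ht, hh
    have : s * (s - 1) = (2 * t + 1) * (2 * t) := by rw [ht]; ring
    nlinarith [gauss]
  have hdiv : s * (s - 1) / 2 = s * t := by
    have : s * (s - 1) = (s * t) * 2 := by rw [ht]; ring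
    rw [this, Int.mul_ediv_cancel _ (by norm_num)]
  constructor
  · rw [hSn, hdiv]
  · rw [hSn, haI]
    have e : s * n - s * t + h = t + n * s := by rw [hh, ht]; ring
    rw [e, Int.add_mul_ediv_right _ _ hs0.ne',
      Int.ediv_eq_zero_of_lt ht0 (by omega)]
    ring
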